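/- Let S = V(f) ⊂ ℙ³(ℂ) with f = w²z² + wz·Q₂(x,y) + H₄(x,y,z), where Q₂ is homogeneous of degree 2 in x,y and H₄ is homogeneous of degree 4 in x,y,z, and suppose O = (0:0:0:1) is an isolated point of the singular locus of S. Then every line contained in S that passes through O is contained in the plane {z = 0}, and there are at most four such lines. -/

import Mathlib

open MvPolynomial

noncomputable section

namespace QFourAux

abbrev MP := MvPolynomial (Fin 4) ℂ

lemma degree_eq_sum_univ (d : Fin 4 →₀ ℕ) : d.degree = ∑ i : Fin 4, d i := by
  rw [Finsupp.degree]
  exact Finset.sum_subset (Finset.subset_univ _)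
    (fun x _ hx => Finsupp.notMem_support_iff.mp hx)

lemma degree_of_mem_support {p : MP} {n : ℕ} (hp : p.IsHomogeneous n)
    {d : Fin 4 →₀ ℕ} (hd : d ∈ p.support) : ∑ i : Fin 4, d i = n := by
  rw [← degree_eq_sum_univ, Finsupp.degree_eq_weight_one]
  exact hp (mem_support_iff.mp hd)

lemma eval_eq_of_eqOn {s : Set (Fin 4)} {p : MP} (hp : p ∈ supported ℂ s)
    {u v : Fin 4 → ℂ} (h : ∀ i ∈ s, u i = v i) : eval u p = eval v p := by
  rw [supported_eq_range_rename] at hp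
  obtain ⟨q, rfl⟩ := hp
  show eval u (rename Subtype.val q) = eval v (rename Subtype.val q)
  rw [eval_rename, eval_rename]
  have : u ∘ Subtype.val = v ∘ Subtype.val := funext fun i => h i.1 i.2
  rw [this]

lemma eval_smul_of_isHomogeneous {p : MP} {n : ℕ} (hp : p.IsHomogeneous n)
    (c : ℂ) (u : Fin 4 → ℂ) : eval (c • u) p = c ^ n * eval u p := by
  rw [eval_eq', eval_eq', Finset.mul_sum]
  apply Finset.sum_congr rfl
  intro d hd
  have hdeg : ∑ i : Fin 4, d i = n := degree_of_mem_support hp hd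
  have : ∏ i : Fin 4, (c • u) i ^ d i = c ^ n * ∏ i : Fin 4, u i ^ d i := by
    simp only [Pi.smul_apply, smul_eq_mul, mul_pow]
    rw [Finset.prod_mul_distrib, Finset.prod_pow_eq_pow_sum, hdeg]
  rw [this]; ring

lemma supported_pderiv {s : Set (Fin 4)} {p : MP} (hp : p ∈ supported ℂ s) (i : Fin 4) :
    pderiv i p ∈ supported ℂ s := by
  by_cases hi : i ∈ s
  · rw [supported_eq_range_rename] at hp ⊢
    obtain ⟨q, rfl⟩ := hp
    exact ⟨pderiv ⟨i, hi⟩ q, (pderiv_rename Subtype.val_injective ⟨i, hi⟩ q).symm ▸ rfl⟩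
  · rw [pderiv_eq_zero_of_notMem_vars fun hv => hi (mem_supported.mp hp hv)]
    exact Subalgebra.zero_mem _

lemma isHomogeneous_pderiv {p : MP} {n : ℕ} (hp : p.IsHomogeneous n) (i : Fin 4) :
    (pderiv i p).IsHomogeneous (n - 1) := by
  nth_rewrite 1 [p.as_sum]
  rw [map_sum]
  apply IsHomogeneous.sum
  intro d hd
  rw [pderiv_monomial]
  rcases Nat.eq_zero_or_pos (d i) with h0 | hpos
  · rw [h0]
    simp only [Nat.cast_zero, mul_zero]
    rw [(monomial _).map_zero]
    exact isHomogeneous_zero _ _ _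
  · apply isHomogeneous_monomial
    have hdeg : ∑ j : Fin 4, d j = n := degree_of_mem_support hp hd
    rw [degree_eq_sum_univ]
    rw [← Finset.sum_erase_add _ _ (Finset.mem_univ i)] at hdeg ⊢
    have h1 : ((d - Finsupp.single i 1 : Fin 4 →₀ ℕ)) i = d i - 1 := by
      rw [Finsupp.tsub_apply, Finsupp.single_eq_same]
    have h2 : ∑ j ∈ Finset.univ.erase i, ((d - Finsupp.single i 1 : Fin 4 →₀ ℕ)) j
        = ∑ j ∈ Finset.univ.erase i, d j := by
      apply Finset.sum_congr rfl
      intro j hj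
      rw [Finsupp.tsub_apply, Finsupp.single_apply, if_neg (Finset.ne_of_mem_erase hj).symm]
      omega
    rw [h2, h1]
    omega

lemma eval_aeval_P (g : Fin 4 → Polynomial ℂ) (p : MP) (t : ℂ) :
    (MvPolynomial.aeval g p).eval t = eval (fun i => (g i).eval t) p := by
  induction p using MvPolynomial.induction_on with
  | C a => simp
  | add p q hp hq => simp [hp, hq]
  | mul_X p j hp => simp [hp]

lemma eval_aeval_MV (g : Fin 4 → MP) (p : MP) (v : Fin 4 → ℂ) :
    eval v (MvPolynomial.aeval g p) = eval (fun i => eval v (g i)) p := by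
  induction p using MvPolynomial.induction_on with
  | C a => simp
  | add p q hp hq => simp only [map_add, hp, hq]
  | mul_X p j hp => simp only [map_mul, aeval_X, eval_X, hp]

lemma pderiv_aeval_comm (g : Fin 4 → MP) (i : Fin 4)
    (hg : ∀ j, pderiv i (g j) = if j = i then 1 else 0) (p : MP) :
    pderiv i (MvPolynomial.aeval g p) = MvPolynomial.aeval g (pderiv i p) := by
  induction p using MvPolynomial.induction_on with
  | C a => simp
  | add p q hp hq => simp only [map_add, hp, hq]
  | mul_X p j hp =>
    have hX : pderiv i (X j : MP) = if j = i then 1 else 0 := by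
      by_cases hji : j = i
      · subst hji; simp
      · simp [pderiv_X_of_ne hji, hji]
    rw [map_mul, aeval_X, pderiv_mul, pderiv_mul, hp, hX, hg j, map_add, map_mul, aeval_X]
    by_cases hji : j = i <;> simp [hji]

open Filter Topology in
lemma exists_nontrivial_zero {p : MP} {n : ℕ} (hp : p.IsHomogeneous n) (hn : 0 < n) :
    ∃ a b : ℂ, ¬(a = 0 ∧ b = 0) ∧ eval ![a, b, 0, 0] p = 0 := by
  set q : Polynomial ℂ := MvPolynomial.aeval ![Polynomial.X, 1, 0, 0] p with hqdef
  have hq : ∀ x : ℂ, q.eval x = eval ![x, 1, 0, 0] p := by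
    intro x
    rw [hqdef, eval_aeval_P]
    have hvv : (fun i => Polynomial.eval x (![Polynomial.X, 1, 0, 0] i)) = (![x, 1, 0, 0] : Fin 4 → ℂ) := by
      funext i
      fin_cases i <;> simp
    rw [hvv]
  by_cases hdeg : q.degree = 0
  · have hconst : ∀ x : ℂ, q.eval x = q.coeff 0 := by
      intro x
      conv_lhs => rw [Polynomial.eq_C_of_degree_le_zero (le_of_eq hdeg)]
      simp
    refine ⟨1, 0, by simp, ?_⟩
    have hcv : Continuous fun y : ℂ => (![1, y, 0, 0] : Fin 4 → ℂ) := by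
      apply continuous_pi
      intro i
      fin_cases i <;> simp <;> fun_prop
    have hcont : Filter.Tendsto (fun y : ℂ => eval ![1, y, 0, 0] p) (𝓝[≠] (0:ℂ))
        (𝓝 (eval ![1, 0, 0, 0] p)) := by
      have h1 : Continuous fun y : ℂ => eval ![1, y, 0, 0] p :=
        (MvPolynomial.continuous_eval p).comp hcv
      have h2 := h1.tendsto 0
      exact h2.mono_left nhdsWithin_le_nhds
    have hlim2 : Filter.Tendsto (fun y : ℂ => eval ![1, y, 0, 0] p) (𝓝[≠] (0:ℂ)) (𝓝 0) := by
      have heq : ∀ y : ℂ, y ≠ 0 → y ^ n * q.coeff 0 = eval ![1, y, 0, 0] p := by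
        intro y hy
        have hvec : (![1, y, 0, 0] : Fin 4 → ℂ) = y • ![1/y, 1, 0, 0] := by
          funext i
          fin_cases i <;> simp [hy]
        rw [hvec, eval_smul_of_isHomogeneous hp, ← hq, hconst]
      have hpowt : Filter.Tendsto (fun y : ℂ => y ^ n * q.coeff 0) (𝓝[≠] (0:ℂ)) (𝓝 0) := by
        have hc : Continuous fun y : ℂ => y ^ n * q.coeff 0 := by fun_prop
        have h2 := hc.tendsto 0
        rw [zero_pow hn.ne', zero_mul] at h2
        exact h2.mono_left nhdsWithin_le_nhds
      refine hpowt.congr' ?_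
      filter_upwards [eventually_mem_nhdsWithin] with y hy
      exact heq y hy
    haveI : (𝓝[≠] (0:ℂ)).NeBot := by
      apply Module.punctured_nhds_neBot ℂ
    exact (tendsto_nhds_unique hcont hlim2)
  · by_cases hq0 : q = 0
    · exact ⟨0, 1, by simp, by rw [← hq 0, hq0]; simp⟩
    · obtain ⟨x, hx⟩ := IsAlgClosed.exists_root q hdeg
      exact ⟨x, 1, by simp, by rw [← hq x]; exact hx⟩

lemma natDegree_aeval_le (g : Fin 4 → Polynomial ℂ) (hg : ∀ i, (g i).natDegree ≤ 1)
    {p : MP} {n : ℕ} (hp : p.IsHomogeneous n) : (MvPolynomial.aeval g p).natDegree ≤ n := by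
  nth_rewrite 1 [p.as_sum]
  rw [map_sum]
  apply Polynomial.natDegree_sum_le_of_forall_le
  intro d hd
  rw [aeval_monomial]
  apply Polynomial.natDegree_mul_le.trans
  rw [show (algebraMap ℂ (Polynomial ℂ)) (coeff d p) = Polynomial.C (coeff d p) from rfl,
    Polynomial.natDegree_C, Finsupp.prod_fintype _ _ (fun i => pow_zero _)]
  simp only [zero_add]
  apply (Polynomial.natDegree_prod_le _ _).trans
  calc ∑ i : Fin 4, ((g i) ^ (d i)).natDegree ≤ ∑ i : Fin 4, d i := by
        apply Finset.sum_le_sum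
        intro i _
        refine Polynomial.natDegree_pow_le.trans ?_
        have := Nat.mul_le_mul_left (d i) (hg i)
        omega
    _ = n := degree_of_mem_support hp hd

lemma coeff_aeval_top (g : Fin 4 → Polynomial ℂ) (hg : ∀ i, (g i).natDegree ≤ 1)
    {p : MP} {n : ℕ} (hp : p.IsHomogeneous n) :
    (MvPolynomial.aeval g p).coeff n = eval (fun i => (g i).coeff 1) p := by
  nth_rewrite 1 [p.as_sum]
  rw [map_sum, Polynomial.finset_sum_coeff, eval_eq']
  apply Finset.sum_congr rfl
  intro d hd
  rw [aeval_monomial, Finsupp.prod_fintype _ _ (fun i => pow_zero _)]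
  have hsum : ∑ i : Fin 4, d i = n := degree_of_mem_support hp hd
  have hpow : ∀ i : Fin 4, ((g i) ^ (d i)).natDegree ≤ d i := by
    intro i
    refine Polynomial.natDegree_pow_le.trans ?_
    have := Nat.mul_le_mul_left (d i) (hg i)
    omega
  have hpowc : ∀ i : Fin 4, ((g i) ^ (d i)).coeff (d i) = ((g i).coeff 1) ^ (d i) := by
    intro i
    have h := Polynomial.coeff_pow_of_natDegree_le (hg i) (m := d i)
    rwa [mul_one] at h
  rw [show (algebraMap ℂ (Polynomial ℂ)) (coeff d p) = Polynomial.C (coeff d p) from rfl]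
  simp only [Fin.prod_univ_four]
  rw [Polynomial.coeff_C_mul]
  have hn4 : n = d 0 + d 1 + d 2 + d 3 := by rw [← hsum, Fin.sum_univ_four]
  rw [hn4,
    Polynomial.coeff_mul_add_eq_of_natDegree_le
      (Polynomial.natDegree_mul_le.trans (add_le_add
        (Polynomial.natDegree_mul_le.trans (add_le_add (hpow 0) (hpow 1))) (hpow 2)))
      (hpow 3),
    Polynomial.coeff_mul_add_eq_of_natDegree_le
      (Polynomial.natDegree_mul_le.trans (add_le_add (hpow 0) (hpow 1))) (hpow 2),
    Polynomial.coeff_mul_add_eq_of_natDegree_le (hpow 0) (hpow 1),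
    hpowc 0, hpowc 1, hpowc 2, hpowc 3]

end QFourAux

noncomputable section Main

open QFourAux Filter Topology

abbrev P3 := Projectivization ℂ (Fin 4 → ℂ)

/-- The quotient topology on `ℙ³(ℂ)` induced from `ℂ⁴ ∖ {0}`. -/
instance : TopologicalSpace P3 :=
  inferInstanceAs (TopologicalSpace (Quotient (projectivizationSetoid ℂ (Fin 4 → ℂ))))

/-- A line in `ℙ³(ℂ)`: the projectivization of a 2-dimensional linear subspace of `ℂ⁴`. -/
def IsLine (L : Set P3) : Prop :=
  ∃ W : Submodule ℂ (Fin 4 → ℂ), Module.finrank ℂ W = 2 ∧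
    L = {P : P3 | P.submodule ≤ W}

/-- The zero set in `ℙ³(ℂ)` of a (homogeneous) polynomial. -/
def zeroSet (f : MvPolynomial (Fin 4) ℂ) : Set P3 :=
  {P | eval P.rep f = 0}

/-- `P` is a singular point of `V(f)`: `P ∈ V(f)` and all first partials vanish at `P`. -/
def IsSingPt (f : MvPolynomial (Fin 4) ℂ) (P : P3) : Prop :=
  eval P.rep f = 0 ∧ ∀ i, eval P.rep (pderiv i f) = 0

/-- `P` is an isolated point of the set `T`. -/
def IsIsolatedPtOf (P : P3) (T : Set P3) : Prop :=
  P ∈ T ∧ ∃ U : Set P3, IsOpen U ∧ P ∈ U ∧ U ∩ T = {P}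

/-- The point `O = (0:0:0:1)`. -/
def ptO : P3 :=
  Projectivization.mk ℂ ![0, 0, 0, 1] (by
    intro h
    simpa using congrFun h 3)

set_option maxHeartbeats 2000000
theorem Q4_lines_through_O_in_plane_and_at_most_four
    (Q₂ H₄ : MvPolynomial (Fin 4) ℂ)
    (hQ₂ : Q₂.IsHomogeneous 2) (hQ₂v : Q₂ ∈ supported ℂ ({0, 1} : Set (Fin 4)))
    (hH₄ : H₄.IsHomogeneous 4) (hH₄v : H₄ ∈ supported ℂ ({0, 1, 2} : Set (Fin 4)))
    (f : MvPolynomial (Fin 4) ℂ)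
    (hf : f = X 3 ^ 2 * X 2 ^ 2 + X 3 * X 2 * Q₂ + H₄)
    (hiso : IsIsolatedPtOf ptO {Q : P3 | IsSingPt f Q}) :
    (∀ L : Set P3, IsLine L → L ⊆ zeroSet f → ptO ∈ L →
        L ⊆ {P : P3 | P.rep 2 = 0}) ∧
      {L : Set P3 | IsLine L ∧ L ⊆ zeroSet f ∧ ptO ∈ L}.Finite ∧
      {L : Set P3 | IsLine L ∧ L ⊆ zeroSet f ∧ ptO ∈ L}.ncard ≤ 4 := by
  classical
  have he4ne : (![0, 0, 0, 1] : Fin 4 → ℂ) ≠ 0 := fun h => by simpa using congrFun h 3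
  have hOsub : ptO.submodule = Submodule.span ℂ {![0, 0, 0, 1]} := by
    rw [ptO, Projectivization.submodule_mk]
  -- f is homogeneous of degree 4
  have hfh : f.IsHomogeneous 4 := by
    rw [hf]
    have h1 : (X (3 : Fin 4) ^ 2 * X 2 ^ 2 : MP).IsHomogeneous 4 :=
      (isHomogeneous_X_pow (R := ℂ) 3 2).mul (isHomogeneous_X_pow (R := ℂ) 2 2)
    have h2 : (X (3 : Fin 4) * X 2 * Q₂ : MP).IsHomogeneous 4 :=
      ((isHomogeneous_X ℂ 3).mul (isHomogeneous_X ℂ 2)).mul hQ₂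
    exact (h1.add h2).add hH₄
  -- transport of vanishing between a vector and the canonical representative
  have evalrep : ∀ (u : Fin 4 → ℂ) (hu : u ≠ 0) {p : MP} {n : ℕ}, p.IsHomogeneous n →
      eval u p = 0 → eval (Projectivization.mk ℂ u hu).rep p = 0 := by
    intro u hu p n hp h0
    obtain ⟨a, ha⟩ := (Projectivization.mk_eq_mk_iff ℂ _ _
      (Projectivization.mk ℂ u hu).rep_nonzero hu).mp
      (Projectivization.mk_rep (Projectivization.mk ℂ u hu))
    rw [← ha, Units.smul_def, eval_smul_of_isHomogeneous hp, h0, mul_zero]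
  have evalmem : ∀ (u : Fin 4 → ℂ) (hu : u ≠ 0) {p : MP} {n : ℕ}, p.IsHomogeneous n →
      eval (Projectivization.mk ℂ u hu).rep p = 0 → eval u p = 0 := by
    intro u hu p n hp h0
    obtain ⟨a, ha⟩ := (Projectivization.mk_eq_mk_iff ℂ _ _
      (Projectivization.mk ℂ u hu).rep_nonzero hu).mp
      (Projectivization.mk_rep (Projectivization.mk ℂ u hu))
    rw [← ha, Units.smul_def, eval_smul_of_isHomogeneous hp] at h0
    rcases mul_eq_zero.mp h0 with h | h
    · exact absurd h (pow_ne_zero _ a.ne_zero)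
    · exact h
  -- normal form of a line through O contained in the surface
  have line_data : ∀ L : Set P3, IsLine L → L ⊆ zeroSet f → ptO ∈ L →
      ∃ a b : ℂ, ¬(a = 0 ∧ b = 0) ∧ eval ![a, b, 0, 0] H₄ = 0 ∧
        L = {P : P3 | P.submodule ≤ Submodule.span ℂ {![a, b, 0, 0], ![0, 0, 0, 1]}} := by
    intro L hL hLS hO
    obtain ⟨W, hW2, rfl⟩ := hL
    have he4W : (![0, 0, 0, 1] : Fin 4 → ℂ) ∈ W := by
      have h := hO
      rw [Set.mem_setOf_eq, hOsub] at h
      exact h (Submodule.mem_span_singleton_self _)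
    have hex : ∃ w, w ∈ W ∧ w ∉ Submodule.span ℂ {(![0, 0, 0, 1] : Fin 4 → ℂ)} := by
      by_contra hcon
      push_neg at hcon
      have hle : W ≤ Submodule.span ℂ {(![0, 0, 0, 1] : Fin 4 → ℂ)} := fun x hx => hcon x hx
      have hr := Submodule.finrank_mono hle
      rw [hW2, finrank_span_singleton he4ne] at hr
      omega
    obtain ⟨w, hwW, hwns⟩ := hex
    set v : Fin 4 → ℂ := w - (w 3) • ![0, 0, 0, 1] with hvdef
    have hv3 : v 3 = 0 := by
      rw [hvdef]
      simp only [Pi.sub_apply, Pi.smul_apply, smul_eq_mul]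
      rw [show (![0, 0, 0, 1] : Fin 4 → ℂ) 3 = 1 from rfl]
      ring
    have hvW : v ∈ W := Submodule.sub_mem _ hwW (Submodule.smul_mem _ _ he4W)
    have hvne : v ≠ 0 := by
      intro h
      apply hwns
      have hw3 : w = (w 3) • ![0, 0, 0, 1] := by rwa [hvdef, sub_eq_zero] at h
      rw [hw3]
      exact Submodule.smul_mem _ _ (Submodule.mem_span_singleton_self _)
    have hli : LinearIndependent ℂ ![v, ![0, 0, 0, 1]] := by
      rw [linearIndependent_fin2]
      constructor
      · simpa using he4ne
      · intro a ha
        simp only [Matrix.cons_val_one, Matrix.head_cons, Matrix.cons_val_zero] at ha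
        apply hvne
        have h3 := congrFun ha 3
        simp only [Pi.smul_apply, smul_eq_mul] at h3
        rw [show (![0, 0, 0, 1] : Fin 4 → ℂ) 3 = 1 from rfl, hv3, mul_one] at h3
        rw [← ha, h3, zero_smul]
    have hWspan : W = Submodule.span ℂ {v, ![0, 0, 0, 1]} := by
      have hle : Submodule.span ℂ {v, ![0, 0, 0, 1]} ≤ W := by
        apply Submodule.span_le.mpr
        rintro x hx
        rcases Set.mem_insert_iff.mp hx with rfl | hx
        · exact hvW
        · rw [Set.mem_singleton_iff.mp hx]; exact he4W
      have hrange : Set.range ![v, ![0, 0, 0, 1]] = {v, ![0, 0, 0, 1]} := by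
        ext x
        simp [Fin.exists_fin_two, eq_comm, or_comm]
      have hfr : Module.finrank ℂ (Submodule.span ℂ ({v, ![0, 0, 0, 1]} : Set (Fin 4 → ℂ))) = 2 := by
        rw [← hrange]
        rw [finrank_span_eq_card hli]
        simp
      symm
      apply Submodule.eq_of_le_of_finrank_le hle
      rw [hW2, hfr]
    -- vanishing along the line
    have key : ∀ t : ℂ, (v 2) ^ 2 * t ^ 2 + (v 2) * (eval v Q₂) * t + eval v H₄ = 0 := by
      intro t
      set u : Fin 4 → ℂ := v + t • ![0, 0, 0, 1] with hudef
      have hucoord : ∀ (i : Fin 4) (c : ℂ), (![0,0,0,1] : Fin 4 → ℂ) i = c → u i = v i + t * c := by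
        intro i c hc
        rw [hudef]
        simp only [Pi.add_apply, Pi.smul_apply, smul_eq_mul, hc]
      have hu0 : u 0 = v 0 := by rw [hucoord 0 0 rfl]; ring
      have hu1 : u 1 = v 1 := by rw [hucoord 1 0 rfl]; ring
      have hu2 : u 2 = v 2 := by rw [hucoord 2 0 rfl]; ring
      have hu3 : u 3 = t := by rw [hucoord 3 1 rfl, hv3]; ring
      have hune : u ≠ 0 := by
        intro h
        apply hvne
        have ht : t = 0 := by rw [← hu3, h]; rfl
        funext i
        have := congrFun h i
        rw [hudef] at this
        simpa [ht] using this
      have humem : Projectivization.mk ℂ u hune ∈ {P : P3 | P.submodule ≤ W} := by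
        rw [Set.mem_setOf_eq, Projectivization.submodule_mk,
          Submodule.span_singleton_le_iff_mem]
        exact Submodule.add_mem _ hvW (Submodule.smul_mem _ _ he4W)
      have h0 : eval u f = 0 := evalmem u hune hfh (hLS humem)
      have hQ : eval u Q₂ = eval v Q₂ := by
        apply eval_eq_of_eqOn hQ₂v
        intro i hi
        rcases hi with rfl | hi
        · exact hu0
        · rw [Set.mem_singleton_iff.mp hi]; exact hu1
      have hH : eval u H₄ = eval v H₄ := by
        apply eval_eq_of_eqOn hH₄v
        intro i hi
        rcases hi with rfl | hi
        · exact hu0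
        rcases hi with rfl | hi
        · exact hu1
        · rw [Set.mem_singleton_iff.mp hi]; exact hu2
      rw [hf] at h0
      simp only [eval_add, eval_mul, eval_pow, eval_X] at h0
      rw [hu2, hu3, hQ, hH] at h0
      linear_combination h0
    have e1 := key 1
    have e2 := key (-1)
    have e3 := key 2
    have hc2 : (v 2) ^ 2 = 0 := by
      linear_combination (1/3 : ℂ) * e3 - (1/2 : ℂ) * e1 + (1/6 : ℂ) * e2
    have hB : (v 2) * eval v Q₂ = 0 := by
      linear_combination (1/2 : ℂ) * e1 - (1/2 : ℂ) * e2
    have hc : v 2 = 0 := (pow_eq_zero_iff (by norm_num : (2:ℕ) ≠ 0)).mp hc2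
    have hH : eval v H₄ = 0 := by linear_combination e1 - hc2 - hB
    have hveq : v = ![v 0, v 1, 0, 0] := by
      funext i
      fin_cases i <;> simp [hc, hv3]
    refine ⟨v 0, v 1, ?_, ?_, ?_⟩
    · rintro ⟨h0, h1⟩
      apply hvne
      rw [hveq, h0, h1]
      funext i
      fin_cases i <;> simp
    · rw [← hveq]; exact hH
    · conv_lhs => rw [hWspan, hveq]
  -- Part 1
  have part1 : ∀ L : Set P3, IsLine L → L ⊆ zeroSet f → ptO ∈ L →
      L ⊆ {P : P3 | P.rep 2 = 0} := by
    intro L hL hLS hO P hP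
    obtain ⟨a, b, hab, hHab, hLeq⟩ := line_data L hL hLS hO
    rw [hLeq, Set.mem_setOf_eq] at hP
    rw [Set.mem_setOf_eq]
    have hrepmem : P.rep ∈ Submodule.span ℂ {![a, b, 0, 0], ![0, 0, 0, 1]} := by
      apply hP
      rw [Projectivization.submodule_eq]
      exact Submodule.mem_span_singleton_self _
    obtain ⟨m, n, hmn⟩ := Submodule.mem_span_pair.mp hrepmem
    have h2 := congrFun hmn 2
    simp only [Pi.add_apply, Pi.smul_apply, smul_eq_mul] at h2
    rw [show (![a, b, 0, 0] : Fin 4 → ℂ) 2 = 0 from rfl,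
      show (![0, 0, 0, 1] : Fin 4 → ℂ) 2 = 0 from rfl] at h2
    rw [← h2]; ring
  -- the binary quartic obtained by setting z = w = 0 is not identically zero
  have hne : ∃ α β : ℂ, eval ![α, β, 0, 0] H₄ ≠ 0 := by
    by_contra hcon
    push_neg at hcon
    set sg : Fin 4 → MP := ![X 0, X 1, 0, 0] with hsg
    have hsH : MvPolynomial.aeval sg H₄ = 0 := by
      apply MvPolynomial.funext
      intro x
      rw [eval_aeval_MV, map_zero]
      rw [show (fun i => eval x (sg i)) = (![x 0, x 1, 0, 0] : Fin 4 → ℂ) from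
        funext fun i => by fin_cases i <;> simp [hsg]]
      exact hcon (x 0) (x 1)
    have hpdz : ∀ i : Fin 4, (i = 0 ∨ i = 1) → ∀ x y w : ℂ,
        eval ![x, y, 0, w] (pderiv i H₄) = 0 := by
      intro i hi x y w
      have hg : ∀ j, pderiv i (sg j) = if j = i then 1 else 0 := by
        intro j
        rcases hi with rfl | rfl <;> fin_cases j <;>
          simp [hsg, Pi.single_apply, Fin.ext_iff] <;> norm_num <;>
          rw [if_neg (by decide)]
      have hcomm := pderiv_aeval_comm sg i hg H₄
      rw [hsH, map_zero] at hcomm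
      have h0 : eval ![x, y, 0, w] (MvPolynomial.aeval sg (pderiv i H₄)) = 0 := by
        rw [← hcomm, map_zero]
      rw [eval_aeval_MV] at h0
      rw [show (fun j => eval ![x, y, 0, w] (sg j)) = (![x, y, 0, 0] : Fin 4 → ℂ) from
        funext fun j => by fin_cases j <;> simp [hsg]] at h0
      calc eval ![x, y, 0, w] (pderiv i H₄) = eval ![x, y, 0, 0] (pderiv i H₄) := by
            apply eval_eq_of_eqOn (supported_pderiv hH₄v i)
            intro j hj
            rcases hj with rfl | hj
            · rfl
            rcases hj with rfl | hj
            · rfl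
            obtain rfl := Set.mem_singleton_iff.mp hj
            rfl
        _ = 0 := h0
    have h3varsH : (3 : Fin 4) ∉ H₄.vars := fun hvv => by
      have := mem_supported.mp hH₄v hvv
      simp at this
    have hpd3H : pderiv (3 : Fin 4) H₄ = 0 := pderiv_eq_zero_of_notMem_vars h3varsH
    have hQ3 : pderiv (3 : Fin 4) Q₂ = 0 := pderiv_eq_zero_of_notMem_vars (fun hvv => by
      have := mem_supported.mp hQ₂v hvv
      simp at this)
    have hQ2z : pderiv (2 : Fin 4) Q₂ = 0 := pderiv_eq_zero_of_notMem_vars (fun hvv => by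
      have := mem_supported.mp hQ₂v hvv
      simp at this)
    have hpd2h : (pderiv (2 : Fin 4) H₄).IsHomogeneous 3 := isHomogeneous_pderiv hH₄ 2
    have hagreeH : ∀ (x y : ℂ) (p : MP), p ∈ supported ℂ ({0, 1, 2} : Set (Fin 4)) →
        eval ![x, y, 0, 1] p = eval ![x, y, 0, 0] p := by
      intro x y p hp
      apply eval_eq_of_eqOn hp
      intro j hj
      rcases hj with rfl | hj
      · rfl
      rcases hj with rfl | hj
      · rfl
      obtain rfl := Set.mem_singleton_iff.mp hj
      rfl
    have hagreeQ : ∀ (x y : ℂ) (p : MP), p ∈ supported ℂ ({0, 1} : Set (Fin 4)) →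
        eval ![x, y, 0, 1] p = eval ![x, y, 0, 0] p := by
      intro x y p hp
      apply eval_eq_of_eqOn hp
      intro j hj
      rcases hj with rfl | hj
      · rfl
      obtain rfl := Set.mem_singleton_iff.mp hj
      rfl
    have hsing : ∀ x y : ℂ, eval ![x, y, 0, 0] Q₂ + eval ![x, y, 0, 0] (pderiv 2 H₄) = 0 →
        IsSingPt f (Projectivization.mk ℂ ![x, y, 0, 1]
          (fun h => by simpa using congrFun h 3)) := by
      intro x y hxy
      have hune : (![x, y, 0, 1] : Fin 4 → ℂ) ≠ 0 := fun h => by simpa using congrFun h 3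
      constructor
      · apply evalrep _ hune hfh
        rw [hf]
        simp only [eval_add, eval_mul, eval_pow, eval_X]
        rw [show (![x, y, 0, 1] : Fin 4 → ℂ) 2 = 0 from rfl, hagreeH x y H₄ hH₄v, hcon x y]
        ring
      · intro i
        apply evalrep _ hune (isHomogeneous_pderiv hfh i)
        fin_cases i
        · show eval ![x, y, 0, 1] (pderiv (0 : Fin 4) f) = 0
          rw [hf]
          have p3 : pderiv (0 : Fin 4) (X (3 : Fin 4) : MP) = 0 := pderiv_X_of_ne (by decide)
          have p2 : pderiv (0 : Fin 4) (X (2 : Fin 4) : MP) = 0 := pderiv_X_of_ne (by decide)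
          simp only [map_add, pderiv_mul, pderiv_pow, p3, p2, mul_zero, zero_mul, add_zero,
            zero_add]
          simp only [eval_add, eval_mul, eval_pow, eval_X, map_natCast, map_one]
          rw [show (![x, y, 0, 1] : Fin 4 → ℂ) 2 = 0 from rfl, hpdz 0 (Or.inl rfl) x y 1]
          ring
        · show eval ![x, y, 0, 1] (pderiv (1 : Fin 4) f) = 0
          rw [hf]
          have p3 : pderiv (1 : Fin 4) (X (3 : Fin 4) : MP) = 0 := pderiv_X_of_ne (by decide)
          have p2 : pderiv (1 : Fin 4) (X (2 : Fin 4) : MP) = 0 := pderiv_X_of_ne (by decide)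
          simp only [map_add, pderiv_mul, pderiv_pow, p3, p2, mul_zero, zero_mul, add_zero,
            zero_add]
          simp only [eval_add, eval_mul, eval_pow, eval_X, map_natCast, map_one]
          rw [show (![x, y, 0, 1] : Fin 4 → ℂ) 2 = 0 from rfl, hpdz 1 (Or.inr rfl) x y 1]
          ring
        · show eval ![x, y, 0, 1] (pderiv (2 : Fin 4) f) = 0
          rw [hf]
          have p3 : pderiv (2 : Fin 4) (X (3 : Fin 4) : MP) = 0 := pderiv_X_of_ne (by decide)
          have p2 : pderiv (2 : Fin 4) (X (2 : Fin 4) : MP) = 1 := pderiv_X_self 2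
          simp only [map_add, pderiv_mul, pderiv_pow, p3, p2, hQ2z, mul_zero, zero_mul,
            add_zero, zero_add, mul_one]
          simp only [eval_add, eval_mul, eval_pow, eval_X, map_natCast, map_one]
          rw [show (![x, y, 0, 1] : Fin 4 → ℂ) 2 = 0 from rfl,
            show (![x, y, 0, 1] : Fin 4 → ℂ) 3 = 1 from rfl,
            hagreeQ x y Q₂ hQ₂v, hagreeH x y _ (supported_pderiv hH₄v 2)]
          linear_combination hxy
        · show eval ![x, y, 0, 1] (pderiv (3 : Fin 4) f) = 0
          rw [hf]
          have p3 : pderiv (3 : Fin 4) (X (3 : Fin 4) : MP) = 1 := pderiv_X_self 3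
          have p2 : pderiv (3 : Fin 4) (X (2 : Fin 4) : MP) = 0 := pderiv_X_of_ne (by decide)
          simp only [map_add, pderiv_mul, pderiv_pow, p3, p2, hQ3, hpd3H, mul_zero, zero_mul,
            add_zero, zero_add, mul_one]
          simp only [eval_add, eval_mul, eval_pow, eval_X, map_natCast, map_one]
          rw [show (![x, y, 0, 1] : Fin 4 → ℂ) 2 = 0 from rfl]
          ring
    -- topology
    obtain ⟨hOmem, U, hUopen, hOU, hUcap⟩ := hiso
    have hφc : Continuous (fun z : ℂ × ℂ => (Projectivization.mk ℂ ![z.1, z.2, 0, 1]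
        (fun h => by simpa using congrFun h 3) : P3)) := by
      have h1 : Continuous (fun z : ℂ × ℂ => (⟨![z.1, z.2, 0, 1],
          fun h => by simpa using congrFun h 3⟩ : {v : Fin 4 → ℂ // v ≠ 0})) := by
        apply Continuous.subtype_mk
        apply continuous_pi
        intro i
        fin_cases i
        · exact continuous_fst
        · exact continuous_snd
        · exact continuous_const
        · exact continuous_const
      exact continuous_quotient_mk'.comp h1
    set V : Set (ℂ × ℂ) := (fun z : ℂ × ℂ => (Projectivization.mk ℂ ![z.1, z.2, 0, 1]
        (fun h => by simpa using congrFun h 3) : P3)) ⁻¹' U with hVdef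
    have hVopen : IsOpen V := hUopen.preimage hφc
    have h0V : ((0 : ℂ), (0 : ℂ)) ∈ V := hOU
    have final : ∀ z : ℂ × ℂ, z ∈ V → z ≠ (0, 0) →
        eval ![z.1, z.2, 0, 0] Q₂ + eval ![z.1, z.2, 0, 0] (pderiv 2 H₄) = 0 → False := by
      intro z hzV hz0 hz
      have hPz := hsing z.1 z.2 hz
      have hmem : Projectivization.mk ℂ ![z.1, z.2, 0, 1]
          (fun h => by simpa using congrFun h 3) ∈ U ∩ {Q : P3 | IsSingPt f Q} := ⟨hzV, hPz⟩
      rw [hUcap] at hmem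
      have heq := Set.mem_singleton_iff.mp hmem
      rw [ptO] at heq
      obtain ⟨c, hc⟩ := (Projectivization.mk_eq_mk_iff ℂ _ _ _ _).mp heq
      have h1 := congrFun hc 0
      have h2 := congrFun hc 1
      simp only [Units.smul_def, Pi.smul_apply, smul_eq_mul] at h1 h2
      rw [show (![(0 : ℂ), 0, 0, 1] : Fin 4 → ℂ) 0 = 0 from rfl, mul_zero] at h1
      rw [show (![(0 : ℂ), 0, 0, 1] : Fin 4 → ℂ) 1 = 0 from rfl, mul_zero] at h2
      exact hz0 (Prod.ext_iff.mpr ⟨h1.symm, h2.symm⟩)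
    haveI : (𝓝[≠] (0 : ℂ)).NeBot := by apply Module.punctured_nhds_neBot ℂ
    by_cases hcase : ∃ va vb : ℂ, ¬(va = 0 ∧ vb = 0) ∧ eval ![va, vb, 0, 0] Q₂ = 0 ∧
        eval ![va, vb, 0, 0] (pderiv 2 H₄) = 0
    · obtain ⟨va, vb, hvab, hQv, hGv⟩ := hcase
      have htend : Filter.Tendsto (fun ε : ℂ => ((ε * va, ε * vb) : ℂ × ℂ)) (𝓝[≠] (0 : ℂ))
          (𝓝 ((0 : ℂ), (0 : ℂ))) := by
        have hx : Continuous (fun ε : ℂ => ((ε * va, ε * vb) : ℂ × ℂ)) := by fun_prop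
        have h := hx.tendsto 0
        simp only [zero_mul] at h
        exact h.mono_left nhdsWithin_le_nhds
      have hev1 : ∀ᶠ ε in 𝓝[≠] (0 : ℂ), ((ε * va, ε * vb) : ℂ × ℂ) ∈ V :=
        htend (hVopen.mem_nhds h0V)
      obtain ⟨ε, hεV, hεne⟩ := (hev1.and eventually_mem_nhdsWithin).exists
      refine final (ε * va, ε * vb) hεV ?_ ?_
      · intro h
        rw [Prod.ext_iff] at h
        obtain ⟨h1, h2⟩ := h
        exact hvab ⟨(mul_eq_zero.mp h1).resolve_left hεne,
          (mul_eq_zero.mp h2).resolve_left hεne⟩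
      · have hsm : (![ε * va, ε * vb, 0, 0] : Fin 4 → ℂ) = ε • ![va, vb, 0, 0] := by
          funext i
          fin_cases i <;> simp
        show eval ![ε * va, ε * vb, 0, 0] Q₂ + eval ![ε * va, ε * vb, 0, 0] (pderiv 2 H₄) = 0
        rw [hsm, eval_smul_of_isHomogeneous hQ₂, eval_smul_of_isHomogeneous hpd2h, hQv, hGv]
        ring
    · push_neg at hcase
      -- there is a point where Q₂ does not vanish
      obtain ⟨w1, w2, hw⟩ : ∃ w1 w2 : ℂ, eval ![w1, w2, 0, 0] Q₂ ≠ 0 := by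
        by_contra hq
        push_neg at hq
        obtain ⟨a, b, hab, hG⟩ := exists_nontrivial_zero hpd2h (by norm_num)
        exact hcase a b (fun h1 h2 => hab ⟨h1, h2⟩) (hq a b) hG
      obtain ⟨v1, v2, hvab, hQv⟩ := exists_nontrivial_zero hQ₂ (by norm_num)
      have hGv : eval ![v1, v2, 0, 0] (pderiv 2 H₄) ≠ 0 := hcase v1 v2 (fun h1 h2 => hvab ⟨h1, h2⟩) hQv
      set u1 : ℂ := w1 - v1 with hu1
      set u2 : ℂ := w2 - v2 with hu2
      set gφ : Fin 4 → Polynomial ℂ := ![Polynomial.C v1 + Polynomial.X * Polynomial.C u1,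
        Polynomial.C v2 + Polynomial.X * Polynomial.C u2, 0, 0] with hgφ
      set φP : Polynomial ℂ := MvPolynomial.aeval gφ Q₂ with hφP
      set ψP : Polynomial ℂ := MvPolynomial.aeval gφ (pderiv 2 H₄) with hψP
      have hgev : ∀ ε : ℂ, (fun i => Polynomial.eval ε (gφ i)) =
          (![v1 + ε * u1, v2 + ε * u2, 0, 0] : Fin 4 → ℂ) := by
        intro ε
        funext i
        fin_cases i <;> simp [hgφ] <;> ring
      have hφev : ∀ ε : ℂ, φP.eval ε = eval ![v1 + ε * u1, v2 + ε * u2, 0, 0] Q₂ := by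
        intro ε
        rw [hφP, eval_aeval_P, hgev]
      have hψev : ∀ ε : ℂ, ψP.eval ε = eval ![v1 + ε * u1, v2 + ε * u2, 0, 0] (pderiv 2 H₄) := by
        intro ε
        rw [hψP, eval_aeval_P, hgev]
      have hvec0 : (![v1 + (0:ℂ) * u1, v2 + (0:ℂ) * u2, 0, 0] : Fin 4 → ℂ) = ![v1, v2, 0, 0] := by
        funext i
        fin_cases i <;> simp
      have hφ0 : φP.eval 0 = 0 := by rw [hφev, hvec0]; exact hQv
      have hψ0 : ψP.eval 0 ≠ 0 := by rw [hψev, hvec0]; exact hGv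
      have hφne : φP ≠ 0 := by
        intro h
        apply hw
        have h1 := hφev 1
        rw [h] at h1
        simp only [Polynomial.eval_zero] at h1
        rw [show (![v1 + (1:ℂ) * u1, v2 + (1:ℂ) * u2, 0, 0] : Fin 4 → ℂ) = ![w1, w2, 0, 0] by
          funext i
          fin_cases i <;> simp [hu1, hu2]] at h1
        exact h1.symm
      -- eventually nonvanishing
      have hevφ : ∀ᶠ ε in 𝓝[≠] (0 : ℂ), φP.eval ε ≠ 0 := by
        have hfin : ({ε : ℂ | φP.IsRoot ε} \ {0}).Finite :=
          (Polynomial.finite_setOf_isRoot hφne).subset Set.diff_subset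
        have h0n : (0 : ℂ) ∉ ({ε : ℂ | φP.IsRoot ε} \ {0}) := by simp
        have hop : ({ε : ℂ | φP.IsRoot ε} \ {0})ᶜ ∈ 𝓝 (0 : ℂ) :=
          hfin.isClosed.isOpen_compl.mem_nhds h0n
        filter_upwards [eventually_mem_nhdsWithin,
          mem_nhdsWithin_of_mem_nhds hop] with ε hne hnr
        intro h
        rw [Set.mem_compl_iff] at hnr
        exact hnr ⟨h, by simpa using hne⟩
      have hevψ : ∀ᶠ ε in 𝓝[≠] (0 : ℂ), ψP.eval ε ≠ 0 := by
        have hop : IsOpen {ε : ℂ | ψP.eval ε ≠ 0} := isOpen_ne.preimage ψP.continuous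
        exact mem_nhdsWithin_of_mem_nhds (hop.mem_nhds hψ0)
      set tf : ℂ → ℂ := fun ε => -φP.eval ε / ψP.eval ε with htf
      have htf0 : Filter.Tendsto tf (𝓝 (0 : ℂ)) (𝓝 0) := by
        have h := ((φP.continuous.tendsto 0).neg.div (ψP.continuous.tendsto 0) hψ0)
        rwa [hφ0, neg_zero, zero_div] at h
      set zf : ℂ → ℂ × ℂ := fun ε => (tf ε * (v1 + ε * u1), tf ε * (v2 + ε * u2)) with hzf
      have hzf0 : Filter.Tendsto zf (𝓝 (0 : ℂ)) (𝓝 ((0 : ℂ), (0 : ℂ))) := by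
        have h1 : Filter.Tendsto (fun ε : ℂ => tf ε * (v1 + ε * u1)) (𝓝 0) (𝓝 0) := by
          have := htf0.mul ((by fun_prop : Continuous fun ε : ℂ => v1 + ε * u1).tendsto 0)
          simpa using this
        have h2 : Filter.Tendsto (fun ε : ℂ => tf ε * (v2 + ε * u2)) (𝓝 0) (𝓝 0) := by
          have := htf0.mul ((by fun_prop : Continuous fun ε : ℂ => v2 + ε * u2).tendsto 0)
          simpa using this
        exact h1.prodMk_nhds h2
      have hevV : ∀ᶠ ε in 𝓝[≠] (0 : ℂ), zf ε ∈ V :=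
        (hzf0.mono_left nhdsWithin_le_nhds) (hVopen.mem_nhds h0V)
      have hevne0 : ∀ᶠ ε in 𝓝[≠] (0 : ℂ),
          ((v1 + ε * u1, v2 + ε * u2) : ℂ × ℂ) ≠ ((0 : ℂ), (0 : ℂ)) := by
        have hcont : Continuous fun ε : ℂ => ((v1 + ε * u1, v2 + ε * u2) : ℂ × ℂ) := by fun_prop
        have hval : ((v1 + (0:ℂ) * u1, v2 + (0:ℂ) * u2) : ℂ × ℂ) ≠ ((0 : ℂ), (0 : ℂ)) := by
          intro h
          rw [Prod.ext_iff] at h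
          obtain ⟨h1, h2⟩ := h
          simp only [zero_mul, add_zero] at h1 h2
          exact hvab ⟨h1, h2⟩
        have hop : IsOpen {p : ℂ × ℂ | p ≠ ((0 : ℂ), (0 : ℂ))} := isOpen_ne
        have hmem0 : (0 : ℂ) ∈ (fun ε : ℂ => ((v1 + ε * u1, v2 + ε * u2) : ℂ × ℂ)) ⁻¹'
            {p : ℂ × ℂ | p ≠ ((0 : ℂ), (0 : ℂ))} := hval
        exact mem_nhdsWithin_of_mem_nhds ((hop.preimage hcont).mem_nhds hmem0)
      obtain ⟨ε, hεV, hεφ, hεψ, hεne0⟩ :=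
        (hevV.and (hevφ.and (hevψ.and hevne0))).exists
      have htfne : tf ε ≠ 0 := by
        rw [htf]
        exact div_ne_zero (neg_ne_zero.mpr hεφ) hεψ
      refine final (zf ε) hεV ?_ ?_
      · intro h
        rw [hzf, Prod.ext_iff] at h
        obtain ⟨h1, h2⟩ := h
        apply hεne0
        rw [Prod.ext_iff]
        exact ⟨(mul_eq_zero.mp h1).resolve_left htfne,
          (mul_eq_zero.mp h2).resolve_left htfne⟩
      · show eval ![tf ε * (v1 + ε * u1), tf ε * (v2 + ε * u2), 0, 0] Q₂ +
          eval ![tf ε * (v1 + ε * u1), tf ε * (v2 + ε * u2), 0, 0] (pderiv 2 H₄) = 0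
        have hsm : (![tf ε * (v1 + ε * u1), tf ε * (v2 + ε * u2), 0, 0] : Fin 4 → ℂ)
            = tf ε • ![v1 + ε * u1, v2 + ε * u2, 0, 0] := by
          funext i
          fin_cases i <;> simp
        rw [hsm, eval_smul_of_isHomogeneous hQ₂, eval_smul_of_isHomogeneous hpd2h,
          ← hφev, ← hψev]
        have hkey : tf ε * ψP.eval ε = -φP.eval ε := by
          rw [htf]
          field_simp
        linear_combination (tf ε) ^ 2 * hkey

  -- Part 2: counting
  obtain ⟨α, β, hαβ⟩ := hne
  have hzerovec : eval (0 : Fin 4 → ℂ) H₄ = 0 := by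
    have h0 : (0 : Fin 4 → ℂ) = (0 : ℂ) • (0 : Fin 4 → ℂ) := by simp
    rw [h0, eval_smul_of_isHomogeneous hH₄]
    norm_num
  obtain ⟨α', β', hdet⟩ : ∃ α' β' : ℂ, α * β' - β * α' ≠ 0 := by
    by_cases hα : α = 0
    · refine ⟨1, 0, ?_⟩
      have hβ : β ≠ 0 := by
        intro hβ
        apply hαβ
        rw [hα, hβ]
        have : (![(0:ℂ), 0, 0, 0] : Fin 4 → ℂ) = 0 := by funext i; fin_cases i <;> rfl
        rw [this, hzerovec]
      simpa [hα] using hβ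
    · exact ⟨0, 1, by simpa using hα⟩
  set gl : Fin 4 → Polynomial ℂ := ![Polynomial.C α' + Polynomial.X * Polynomial.C α,
      Polynomial.C β' + Polynomial.X * Polynomial.C β, 0, 0] with hgl
  have hgl1 : ∀ i, (gl i).natDegree ≤ 1 := by
    intro i
    have hd : ∀ c d : ℂ, (Polynomial.C c + Polynomial.X * Polynomial.C d).natDegree ≤ 1 := by
      intro c d
      apply (Polynomial.natDegree_add_le _ _).trans
      apply max_le (by simp)
      apply (Polynomial.natDegree_mul_le).trans
      simp
    fin_cases i
    · exact hd α' α
    · exact hd β' β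
    · simp [hgl]
    · simp [hgl]
  have hglc : (fun i => (gl i).coeff 1) = (![α, β, 0, 0] : Fin 4 → ℂ) := by
    funext i
    fin_cases i <;> simp [hgl]
  set r : Polynomial ℂ := MvPolynomial.aeval gl H₄ with hrdef
  have hr4 : r.coeff 4 = eval ![α, β, 0, 0] H₄ := by
    rw [hrdef, coeff_aeval_top gl hgl1 hH₄, hglc]
  have hrne : r ≠ 0 := fun h => hαβ (by rw [← hr4, h, Polynomial.coeff_zero])
  have hrdeg : r.natDegree ≤ 4 := natDegree_aeval_le gl hgl1 hH₄
  have hreval : ∀ t : ℂ, r.eval t = eval ![α' + t * α, β' + t * β, 0, 0] H₄ := by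
    intro t
    rw [hrdef, eval_aeval_P]
    have hvv : (fun i => Polynomial.eval t (gl i)) = (![α' + t * α, β' + t * β, 0, 0] : Fin 4 → ℂ) := by
      funext i
      fin_cases i <;> simp [hgl] <;> ring
    rw [hvv]
  have hsubset : {L : Set P3 | IsLine L ∧ L ⊆ zeroSet f ∧ ptO ∈ L} ⊆
      (fun t : ℂ => {P : P3 | P.submodule ≤
        Submodule.span ℂ {![α' + t * α, β' + t * β, 0, 0], ![0, 0, 0, 1]}}) ''
        (r.roots.toFinset : Set ℂ) := by
    rintro L ⟨hL, hLS, hO⟩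
    obtain ⟨a, b, hab, hHab, hLeq⟩ := line_data L hL hLS hO
    set D : ℂ := α * β' - β * α' with hD
    set uu : ℂ := (α * b - β * a) / D with huu
    have hnum : α * b - β * a ≠ 0 := by
      intro hzero
      -- then (a, b) is proportional to (α, β), contradicting hHab vs hαβ
      have hlam : ∃ lam : ℂ, lam ≠ 0 ∧ a = lam * α ∧ b = lam * β := by
        by_cases hα : α = 0
        · subst hα
          have hβ : β ≠ 0 := by
            intro hβ
            subst hβ
            apply hαβ
            rw [show (![(0:ℂ), (0:ℂ), 0, 0] : Fin 4 → ℂ) = 0 by funext i; fin_cases i <;> rfl,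
              hzerovec]
          have ha0 : a = 0 := by
            have h : β * a = 0 := by linear_combination -hzero
            exact (mul_eq_zero.mp h).resolve_left hβ
          refine ⟨b / β, ?_, ?_, ?_⟩
          · intro h
            rcases div_eq_zero_iff.mp h with h | h
            · exact hab ⟨ha0, h⟩
            · exact hβ h
          · rw [ha0, mul_zero]
          · field_simp
        · refine ⟨a / α, ?_, ?_, ?_⟩
          · intro h
            rcases div_eq_zero_iff.mp h with h | h
            · apply hab
              refine ⟨h, ?_⟩
              have hb0 : α * b = 0 := by rw [h] at hzero; linear_combination hzero
              exact (mul_eq_zero.mp hb0).resolve_left hα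
            · exact absurd h hα
          · field_simp
          · field_simp
            linear_combination hzero
      obtain ⟨lam, hlam0, ha, hb⟩ := hlam
      apply hαβ
      have hvec : (![a, b, 0, 0] : Fin 4 → ℂ) = lam • ![α, β, 0, 0] := by
        funext i
        fin_cases i <;> simp [ha, hb]
      rw [hvec, eval_smul_of_isHomogeneous hH₄] at hHab
      rcases mul_eq_zero.mp hHab with h | h
      · exact absurd h (pow_ne_zero _ hlam0)
      · exact h
    have huune : uu ≠ 0 := div_ne_zero hnum hdet
    set s : ℂ := (a * β' - b * α') / D with hs
    set t : ℂ := s / uu with ht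
    have ha_eq : a = uu * (α' + t * α) := by
      have e : uu * (α' + t * α) = uu * α' + s * α := by rw [ht]; field_simp
      rw [e, hs, huu, div_mul_eq_mul_div, div_mul_eq_mul_div, ← add_div, eq_div_iff hdet]
      ring
    have hb_eq : b = uu * (β' + t * β) := by
      have e : uu * (β' + t * β) = uu * β' + s * β := by rw [ht]; field_simp
      rw [e, hs, huu, div_mul_eq_mul_div, div_mul_eq_mul_div, ← add_div, eq_div_iff hdet]
      ring

    have hvec : (![a, b, 0, 0] : Fin 4 → ℂ) = uu • ![α' + t * α, β' + t * β, 0, 0] := by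
      funext i
      fin_cases i <;> simp [ha_eq, hb_eq]
    have hroot : r.eval t = 0 := by
      rw [hreval t]
      rw [hvec, eval_smul_of_isHomogeneous hH₄] at hHab
      rcases mul_eq_zero.mp hHab with h | h
      · exact absurd h (pow_ne_zero _ huune)
      · exact h
    refine ⟨t, ?_, ?_⟩
    · rw [Finset.mem_coe, Multiset.mem_toFinset]
      exact (Polynomial.mem_roots hrne).mpr hroot
    · rw [hLeq]
      have hsp1 : Submodule.span ℂ ({![α' + t * α, β' + t * β, 0, 0], ![0, 0, 0, 1]} :
          Set (Fin 4 → ℂ)) =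
          Submodule.span ℂ {uu • ![α' + t * α, β' + t * β, 0, 0], ![0, 0, 0, 1]} := by
        apply le_antisymm
        · apply Submodule.span_le.mpr
          rintro x hx
          rcases Set.mem_insert_iff.mp hx with h | hx
          · rw [h]
            have hmem : uu • ![α' + t * α, β' + t * β, 0, 0] ∈
                Submodule.span ℂ ({uu • ![α' + t * α, β' + t * β, 0, 0], ![0, 0, 0, 1]} :
                  Set (Fin 4 → ℂ)) := Submodule.subset_span (Set.mem_insert _ _)
            have hmem2 := Submodule.smul_mem _ uu⁻¹ hmem
            rwa [smul_smul, inv_mul_cancel₀ huune, one_smul] at hmem2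
          · exact Submodule.subset_span (by simp [hx])
        · apply Submodule.span_le.mpr
          rintro x hx
          rcases Set.mem_insert_iff.mp hx with h | hx
          · rw [h]
            exact Submodule.smul_mem _ _ (Submodule.subset_span (Set.mem_insert _ _))
          · exact Submodule.subset_span (by simp [hx])
      show {P : P3 | P.submodule ≤ Submodule.span ℂ
          {![α' + t * α, β' + t * β, 0, 0], ![0, 0, 0, 1]}} = _
      rw [hsp1, ← hvec]
  refine ⟨part1, ?_, ?_⟩
  · exact Set.Finite.subset ((r.roots.toFinset.finite_toSet).image _) hsubset
  · calc {L : Set P3 | IsLine L ∧ L ⊆ zeroSet f ∧ ptO ∈ L}.ncard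
        ≤ ((fun t : ℂ => {P : P3 | P.submodule ≤
            Submodule.span ℂ {![α' + t * α, β' + t * β, 0, 0], ![0, 0, 0, 1]}}) ''
            (r.roots.toFinset : Set ℂ)).ncard :=
          Set.ncard_le_ncard hsubset ((r.roots.toFinset.finite_toSet).image _)
      _ ≤ (r.roots.toFinset : Set ℂ).ncard :=
          Set.ncard_image_le (r.roots.toFinset.finite_toSet)
      _ = r.roots.toFinset.card := Set.ncard_coe_finset _
      _ ≤ 4 := le_trans (Multiset.toFinset_card_le _)
          (le_trans (Polynomial.card_roots' r) hrdeg)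

end Main
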